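/- Let d ≥ 1 and suppose D : ℝ^d → ℝ and ln ρ_eq : ℝ^d → ℝ have bounded derivatives up to order 4, ρ_eq > 0, and inf_x D(x) > 0. Then there exists a polynomial K₁ in the variables (x, z) ∈ ℝ^d × ℝ^d such that for all x, z ∈ ℝ^d and all ε ∈ (0,1], | α(x,z,ε) − β(x,z,ε) | ≤ K₁(x,z) ε². -/

import Mathlib

open Real MeasureTheory
open scoped RealInnerProductSpace

/-- Rescaled trial density `q(x,z) = (4πD(x))^{-d/2} exp(−|z|²/(4D(x)))`. -/
noncomputable def qscaled {d : ℕ} (D : EuclideanSpace ℝ (Fin d) → ℝ)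
    (x z : EuclideanSpace ℝ (Fin d)) : ℝ :=
  (4 * π * D x) ^ (-(d : ℝ) / 2) * Real.exp (-‖z‖ ^ 2 / (4 * D x))

/-- Rescaled Metropolis–Hastings acceptance probability
`α(x,z,ε) = min(1, q(x+εz,z)ρ_eq(x+εz)/(q(x,z)ρ_eq(x)))`. -/
noncomputable def alphaScaled {d : ℕ} (D ρeq : EuclideanSpace ℝ (Fin d) → ℝ)
    (x z : EuclideanSpace ℝ (Fin d)) (ε : ℝ) : ℝ :=
  min 1 (qscaled D (x + ε • z) z * ρeq (x + ε • z) / (qscaled D x z * ρeq x))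

/-- First-order approximation
`β(x,z,ε) = min(1, exp(ε ∇_x q(x,z)·z/q(x,z) + ε ∇ρ_eq(x)·z/ρ_eq(x)))`. -/
noncomputable def betaScaled {d : ℕ} (D ρeq : EuclideanSpace ℝ (Fin d) → ℝ)
    (x z : EuclideanSpace ℝ (Fin d)) (ε : ℝ) : ℝ :=
  min 1 (Real.exp (ε * (⟪gradient (fun w => qscaled D w z) x, z⟫ / qscaled D x z)
    + ε * (⟪gradient ρeq x, z⟫ / ρeq x)))

/-! ### Auxiliary lemmas -/

lemma aux_inner_gradient {d : ℕ} (f : EuclideanSpace ℝ (Fin d) → ℝ)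
    (x z : EuclideanSpace ℝ (Fin d)) : ⟪gradient f x, z⟫ = fderiv ℝ f x z := by
  simp [gradient, InnerProductSpace.toDual_symm_apply]

lemma aux_min_exp_mono (a b : ℝ) (hab : a ≤ b) :
    min 1 (Real.exp b) - min 1 (Real.exp a) ≤ b - a := by
  have key : ∀ t : ℝ, min 1 (Real.exp t) = Real.exp (min 0 t) := by
    intro t
    rcases le_total t 0 with h | h
    · rw [min_eq_right h, min_eq_right (Real.exp_le_one_iff.mpr h)]
    · rw [min_eq_left h, min_eq_left (Real.one_le_exp h), Real.exp_zero]
  rw [key, key]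
  set s := min 0 a with hs
  set t := min 0 b with ht
  have hst : s ≤ t := min_le_min le_rfl hab
  have hts : t - s ≤ b - a := by
    rcases le_total a 0 with h | h
    · have : s = a := min_eq_right h
      have h2 : t ≤ b := min_le_right 0 b
      simp [this]; linarith
    · have hsa : s = 0 := min_eq_left h
      have htb : t = 0 := min_eq_left (le_trans h hab)
      simp [hsa, htb]; linarith
  have ht0 : t ≤ 0 := min_le_left 0 b
  have h1 : Real.exp t * Real.exp (s - t) = Real.exp s := by
    rw [← Real.exp_add]; ring_nf
  have h2 : (1 : ℝ) + (s - t) ≤ Real.exp (s - t) := by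
    have := Real.add_one_le_exp (s - t); linarith
  have h3 : Real.exp t ≤ 1 := Real.exp_le_one_iff.mpr ht0
  have h4 : 0 < Real.exp t := Real.exp_pos t
  nlinarith

lemma aux_min_exp (a b : ℝ) :
    |min 1 (Real.exp a) - min 1 (Real.exp b)| ≤ |a - b| := by
  rcases le_total a b with h | h
  · rw [abs_sub_comm, abs_of_nonneg (by
      have := min_le_min (le_refl (1:ℝ)) (Real.exp_le_exp.mpr h); linarith),
      abs_sub_comm, abs_of_nonneg (by linarith)]
    exact aux_min_exp_mono a b h
  · rw [abs_of_nonneg (by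
      have := min_le_min (le_refl (1:ℝ)) (Real.exp_le_exp.mpr h); linarith),
      abs_of_nonneg (by linarith)]
    exact aux_min_exp_mono b a h

lemma aux_frac (a m v c : ℝ) (hc : 0 < c) (hv : c ≤ v) (ha : |a| ≤ m) (n : ℕ) :
    |a / v ^ n| ≤ m / c ^ n := by
  have hv0 : 0 < v := hc.trans_le hv
  rw [abs_div, abs_of_pos (pow_pos hv0 n)]
  exact div_le_div₀ (le_trans (abs_nonneg a) ha) ha (pow_pos hc n)
    (pow_le_pow_left₀ hc.le hv n)

lemma aux_norm_fderiv_one {d : ℕ} (f : EuclideanSpace ℝ (Fin d) → ℝ)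
    (y : EuclideanSpace ℝ (Fin d)) : ‖fderiv ℝ f y‖ = ‖iteratedFDeriv ℝ 1 f y‖ := by
  rw [← norm_iteratedFDeriv_fderiv, norm_iteratedFDeriv_zero]

lemma aux_norm_fderiv_two {d : ℕ} (f : EuclideanSpace ℝ (Fin d) → ℝ)
    (y : EuclideanSpace ℝ (Fin d)) :
    ‖fderiv ℝ (fderiv ℝ f) y‖ = ‖iteratedFDeriv ℝ 2 f y‖ := by
  rw [← norm_iteratedFDeriv_fderiv]
  rw [← norm_iteratedFDeriv_fderiv, norm_iteratedFDeriv_zero]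

lemma aux_bilin {E : Type*} [NormedAddCommGroup E] [NormedSpace ℝ E]
    (T : E →L[ℝ] E →L[ℝ] ℝ) (M : ℝ) (hT : ‖T‖ ≤ M) (z : E) :
    |T z z| ≤ M * ‖z‖ ^ 2 := by
  have h1 : ‖T z‖ ≤ M * ‖z‖ :=
    le_trans (T.le_opNorm z) (mul_le_mul_of_nonneg_right hT (norm_nonneg z))
  calc |T z z| = ‖T z z‖ := (Real.norm_eq_abs _).symm
    _ ≤ ‖T z‖ * ‖z‖ := (T z).le_opNorm z
    _ ≤ (M * ‖z‖) * ‖z‖ := mul_le_mul_of_nonneg_right h1 (norm_nonneg z)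
    _ = M * ‖z‖ ^ 2 := by ring

set_option maxHeartbeats 1000000 in
/-- pointwise estimate `|α(x,z,ε) − β(x,z,ε)| ≤ K₁(x,z) ε²` with
`K₁` a polynomial in `(x,z)`. -/
theorem alpha_beta_pointwise_estimate {d : ℕ} (hd : 1 ≤ d)
    (D ρeq : EuclideanSpace ℝ (Fin d) → ℝ)
    (hρeqpos : ∀ x, 0 < ρeq x)
    (hDsmooth : ContDiff ℝ 4 D)
    (hLsmooth : ContDiff ℝ 4 (fun x => Real.log (ρeq x)))
    (hDbd : ∀ i : ℕ, 1 ≤ i → i ≤ 4 → ∃ C : ℝ, ∀ x, ‖iteratedFDeriv ℝ i D x‖ ≤ C)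
    (hLbd : ∀ i : ℕ, 1 ≤ i → i ≤ 4 →
      ∃ C : ℝ, ∀ x, ‖iteratedFDeriv ℝ i (fun y => Real.log (ρeq y)) x‖ ≤ C)
    (hDinf : ∃ c : ℝ, 0 < c ∧ ∀ x, c ≤ D x) :
    ∃ K₁ : MvPolynomial (Fin d ⊕ Fin d) ℝ,
      ∀ (x z : EuclideanSpace ℝ (Fin d)), ∀ ε ∈ Set.Ioc (0 : ℝ) 1,
        |alphaScaled D ρeq x z ε - betaScaled D ρeq x z ε|
          ≤ MvPolynomial.eval (Sum.elim (fun i => x i) (fun i => z i)) K₁ * ε ^ 2 := by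
  classical
  obtain ⟨c, hc, hcD⟩ := hDinf
  set Lf : EuclideanSpace ℝ (Fin d) → ℝ := fun y => Real.log (ρeq y) with hLf_def
  obtain ⟨C₁, hC₁⟩ := hDbd 1 (by norm_num) (by norm_num)
  obtain ⟨C₂, hC₂⟩ := hDbd 2 (by norm_num) (by norm_num)
  obtain ⟨CL, hCL⟩ := hLbd 2 (by norm_num) (by norm_num)
  set M₁ : ℝ := max C₁ 0 with hM₁_def
  set M₂ : ℝ := max C₂ 0 with hM₂_def
  set ML : ℝ := max CL 0 with hML_def
  have hM₁0 : 0 ≤ M₁ := le_max_right _ _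
  have hM₂0 : 0 ≤ M₂ := le_max_right _ _
  have hML0 : 0 ≤ ML := le_max_right _ _
  set A : ℝ := ((d : ℝ)/2) * (M₂/c + M₁^2/c^2) + ML with hA_def
  set B : ℝ := (1/4) * (M₂/c^2 + 2 * M₁^2/c^3) with hB_def
  have hA0 : 0 ≤ A := by positivity
  have hB0 : 0 ≤ B := by positivity
  -- differentiability facts
  have hDdiff : Differentiable ℝ D := hDsmooth.differentiable (by norm_num)
  have hDdiff2 : Differentiable ℝ (fderiv ℝ D) :=
    (hDsmooth.fderiv_right (m := 3) (by norm_num)).differentiable (by norm_num)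
  have hLdiff : Differentiable ℝ Lf := hLsmooth.differentiable (by norm_num)
  have hLdiff2 : Differentiable ℝ (fderiv ℝ Lf) :=
    (hLsmooth.fderiv_right (m := 3) (by norm_num)).differentiable (by norm_num)
  have hDpos : ∀ y, 0 < D y := fun y => lt_of_lt_of_le hc (hcD y)
  have hM₁' : ∀ y, ‖fderiv ℝ D y‖ ≤ M₁ := fun y => by
    rw [aux_norm_fderiv_one]; exact le_trans (hC₁ y) (le_max_left _ _)
  have hM₂' : ∀ y, ‖fderiv ℝ (fderiv ℝ D) y‖ ≤ M₂ := fun y => by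
    rw [aux_norm_fderiv_two]; exact le_trans (hC₂ y) (le_max_left _ _)
  have hML' : ∀ y, ‖fderiv ℝ (fderiv ℝ Lf) y‖ ≤ ML := fun y => by
    rw [aux_norm_fderiv_two]; exact le_trans (hCL y) (le_max_left _ _)
  -- the polynomial
  set S : MvPolynomial (Fin d ⊕ Fin d) ℝ :=
    ∑ i : Fin d, (MvPolynomial.X (Sum.inr i)) ^ 2 with hS_def
  refine ⟨MvPolynomial.C A * S + MvPolynomial.C B * S ^ 2, ?_⟩
  intro x z ε hε
  have hε0 : 0 < ε := hε.1
  have hε1 : ε ≤ 1 := hε.2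
  -- evaluation of the polynomial
  have hz2 : ‖z‖ ^ 2 = ∑ i : Fin d, (z i) ^ 2 := by
    rw [EuclideanSpace.norm_eq, Real.sq_sqrt (by positivity)]
    simp [sq_abs]
  have heval : MvPolynomial.eval (Sum.elim (fun i => x i) (fun i => z i))
      (MvPolynomial.C A * S + MvPolynomial.C B * S ^ 2)
      = A * ‖z‖ ^ 2 + B * (‖z‖ ^ 2) ^ 2 := by
    have hSeval : MvPolynomial.eval (Sum.elim (fun i => x i) (fun i => z i)) S
        = ‖z‖ ^ 2 := by
      rw [hz2, hS_def]
      simp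
    simp [hSeval]
  rw [heval]
  -- scalar path functions
  set γ : ℝ → EuclideanSpace ℝ (Fin d) := fun t => x + t • z with hγ_def
  have hγ : ∀ t, HasDerivAt γ z t := fun t => by
    simpa [hγ_def] using ((hasDerivAt_id t).smul_const z).const_add x
  have hγ0 : γ 0 = x := by simp [hγ_def]
  set u : ℝ → ℝ := fun t => D (γ t) with hu_def
  set u1 : ℝ → ℝ := fun t => fderiv ℝ D (γ t) z with hu1_def
  set u2 : ℝ → ℝ := fun t => (fderiv ℝ (fderiv ℝ D) (γ t) z) z with hu2_def
  set l1 : ℝ → ℝ := fun t => fderiv ℝ Lf (γ t) z with hl1_def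
  set l2 : ℝ → ℝ := fun t => (fderiv ℝ (fderiv ℝ Lf) (γ t) z) z with hl2_def
  have hucpos : ∀ t, c ≤ u t := fun t => hcD (γ t)
  have hupos : ∀ t, 0 < u t := fun t => hDpos (γ t)
  have hune : ∀ t, u t ≠ 0 := fun t => (hupos t).ne'
  have h4pi : ∀ t, 0 < 4 * π * u t := fun t => by
    have := hupos t; have := Real.pi_pos; positivity
  -- derivative facts for u
  have hdu : ∀ t, HasDerivAt u (u1 t) t := fun t =>
    ((hDdiff (γ t)).hasFDerivAt).comp_hasDerivAt t (hγ t)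
  have hdu1 : ∀ t, HasDerivAt u1 (u2 t) t := fun t => by
    have hc' : HasDerivAt (fun t : ℝ => fderiv ℝ D (γ t))
        (fderiv ℝ (fderiv ℝ D) (γ t) z) t :=
      ((hDdiff2 (γ t)).hasFDerivAt).comp_hasDerivAt t (hγ t)
    simpa using hc'.clm_apply (hasDerivAt_const t z)
  have hdl : ∀ t, HasDerivAt (fun t => Lf (γ t)) (l1 t) t := fun t =>
    ((hLdiff (γ t)).hasFDerivAt).comp_hasDerivAt t (hγ t)
  have hdl1 : ∀ t, HasDerivAt l1 (l2 t) t := fun t => by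
    have hc' : HasDerivAt (fun t : ℝ => fderiv ℝ Lf (γ t))
        (fderiv ℝ (fderiv ℝ Lf) (γ t) z) t :=
      ((hLdiff2 (γ t)).hasFDerivAt).comp_hasDerivAt t (hγ t)
    simpa using hc'.clm_apply (hasDerivAt_const t z)
  -- bounds
  have hbu1 : ∀ t, |u1 t| ≤ M₁ * ‖z‖ := fun t => by
    rw [hu1_def]
    calc |fderiv ℝ D (γ t) z| = ‖fderiv ℝ D (γ t) z‖ := (Real.norm_eq_abs _).symm
      _ ≤ ‖fderiv ℝ D (γ t)‖ * ‖z‖ := (fderiv ℝ D (γ t)).le_opNorm z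
      _ ≤ M₁ * ‖z‖ := mul_le_mul_of_nonneg_right (hM₁' _) (norm_nonneg z)
  have hbu2 : ∀ t, |u2 t| ≤ M₂ * ‖z‖ ^ 2 := fun t =>
    aux_bilin _ _ (hM₂' (γ t)) z
  have hbl2 : ∀ t, |l2 t| ≤ ML * ‖z‖ ^ 2 := fun t =>
    aux_bilin _ _ (hML' (γ t)) z
  -- the scalar log-density along the path
  set G : EuclideanSpace ℝ (Fin d) → ℝ :=
    fun w => (-(d : ℝ)/2) * Real.log (4 * π * D w) + -‖z‖ ^ 2 / (4 * D w) with hG_def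
  have hqG : ∀ w, qscaled D w z = Real.exp (G w) := by
    intro w
    have hpos : 0 < 4 * π * D w := by
      have := hDpos w; have := Real.pi_pos; positivity
    rw [hG_def]
    simp only [qscaled]
    rw [Real.rpow_def_of_pos hpos, Real.exp_add, mul_comm (Real.log (4 * π * D w))]
  set h : ℝ → ℝ := fun t => G (γ t) + Lf (γ t) with hh_def
  set g1 : ℝ → ℝ := fun t =>
    (-(d : ℝ)/2) * (u1 t / u t) + (‖z‖ ^ 2 / 4) * (u1 t / (u t) ^ 2) with hg1_def
  set h1 : ℝ → ℝ := fun t => g1 t + l1 t with hh1_def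
  set h2 : ℝ → ℝ := fun t =>
    (-(d : ℝ)/2) * (u2 t / u t - u1 t ^ 2 / (u t) ^ 2)
      + (‖z‖ ^ 2 / 4) * (u2 t / (u t) ^ 2 - 2 * u1 t ^ 2 / (u t) ^ 3)
      + l2 t with hh2_def
  -- derivative of G ∘ γ
  have hdG : ∀ t, HasDerivAt (fun t => G (γ t)) (g1 t) t := by
    intro t
    have hlog : HasDerivAt (fun t => Real.log (4 * π * u t))
        ((4 * π * u1 t) / (4 * π * u t)) t :=
      (((hdu t).const_mul (4 * π))).log (h4pi t).ne'
    have hinv : HasDerivAt (fun t => -‖z‖ ^ 2 / (4 * u t))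
        ((0 * (4 * u t) - (-‖z‖ ^ 2) * (4 * u1 t)) / (4 * u t) ^ 2) t :=
      (hasDerivAt_const t (-‖z‖ ^ 2)).div ((hdu t).const_mul 4)
        (by have := hune t; positivity)
    have := (hlog.const_mul (-(d : ℝ)/2)).add hinv
    have heq : (fun t => (-(d : ℝ)/2) * Real.log (4 * π * u t) + -‖z‖ ^ 2 / (4 * u t))
        = fun t => G (γ t) := by
      funext s; rw [hG_def]
    simp only [Pi.add_def] at this
    rw [heq] at this
    refine this.congr_deriv ?_
    rw [hg1_def]
    have hne := hune t
    have hpine := Real.pi_ne_zero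
    field_simp
    ring
  have hdh : ∀ t, HasDerivAt h (h1 t) t := fun t => (hdG t).add (hdl t)
  have hdh1 : ∀ t, HasDerivAt h1 (h2 t) t := by
    intro t
    have hne := hune t
    have hq1 : HasDerivAt (fun t => u1 t / u t)
        ((u2 t * u t - u1 t * u1 t) / (u t) ^ 2) t := (hdu1 t).div (hdu t) hne
    have hq2 : HasDerivAt (fun t => u1 t / (u t) ^ 2)
        ((u2 t * (u t) ^ 2 - u1 t * (2 * u t ^ 1 * u1 t)) / ((u t) ^ 2) ^ 2) t :=
      (hdu1 t).div ((hdu t).pow 2) (by positivity)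
    have := ((hq1.const_mul (-(d : ℝ)/2)).add (hq2.const_mul (‖z‖ ^ 2 / 4))).add (hdl1 t)
    refine this.congr_deriv ?_
    rw [hh2_def]
    field_simp
  -- bound on h2
  have hbh2 : ∀ t, |h2 t| ≤ A * ‖z‖ ^ 2 + B * (‖z‖ ^ 2) ^ 2 := by
    intro t
    have e1 : |u2 t / u t ^ 1| ≤ M₂ * ‖z‖ ^ 2 / c ^ 1 :=
      aux_frac _ _ _ _ hc (hucpos t) (hbu2 t) 1
    have e2 : |u1 t ^ 2 / u t ^ 2| ≤ (M₁ * ‖z‖) ^ 2 / c ^ 2 := by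
      refine aux_frac _ _ _ _ hc (hucpos t) ?_ 2
      rw [abs_pow]
      exact pow_le_pow_left₀ (abs_nonneg _) (hbu1 t) 2
    have e3 : |u2 t / u t ^ 2| ≤ M₂ * ‖z‖ ^ 2 / c ^ 2 :=
      aux_frac _ _ _ _ hc (hucpos t) (hbu2 t) 2
    have e4 : |u1 t ^ 2 / u t ^ 3| ≤ (M₁ * ‖z‖) ^ 2 / c ^ 3 := by
      refine aux_frac _ _ _ _ hc (hucpos t) ?_ 3
      rw [abs_pow]
      exact pow_le_pow_left₀ (abs_nonneg _) (hbu1 t) 2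
    have e5 := hbl2 t
    have hz0 : (0:ℝ) ≤ ‖z‖ ^ 2 := by positivity
    have step1 : |h2 t| ≤
        ((d : ℝ)/2) * (|u2 t / u t ^ 1| + |u1 t ^ 2 / u t ^ 2|)
          + (‖z‖ ^ 2 / 4) * (|u2 t / u t ^ 2| + 2 * |u1 t ^ 2 / u t ^ 3|)
          + |l2 t| := by
      rw [hh2_def]
      have t1 : |(-(d : ℝ)/2) * (u2 t / u t - u1 t ^ 2 / (u t) ^ 2)|
          ≤ ((d : ℝ)/2) * (|u2 t / u t ^ 1| + |u1 t ^ 2 / u t ^ 2|) := by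
        rw [abs_mul]
        have : |(-(d : ℝ)/2)| = (d : ℝ)/2 := by
          rw [abs_of_nonpos (by { have h0 : (0:ℝ) ≤ (d:ℝ) := Nat.cast_nonneg d; linarith })]; ring
        rw [this, pow_one]
        exact mul_le_mul_of_nonneg_left (abs_sub _ _) (by positivity)
      have t2 : |(‖z‖ ^ 2 / 4) * (u2 t / (u t) ^ 2 - 2 * u1 t ^ 2 / (u t) ^ 3)|
          ≤ (‖z‖ ^ 2 / 4) * (|u2 t / u t ^ 2| + 2 * |u1 t ^ 2 / u t ^ 3|) := by
        rw [abs_mul, abs_of_nonneg (by positivity : (0:ℝ) ≤ ‖z‖ ^ 2 / 4)]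
        refine mul_le_mul_of_nonneg_left ?_ (by positivity)
        refine le_trans (abs_sub _ _) ?_
        have : |2 * u1 t ^ 2 / (u t) ^ 3| = 2 * |u1 t ^ 2 / u t ^ 3| := by
          rw [mul_div_assoc, abs_mul]; norm_num
        rw [this]
      calc |(-(d : ℝ)/2) * (u2 t / u t - u1 t ^ 2 / (u t) ^ 2)
            + (‖z‖ ^ 2 / 4) * (u2 t / (u t) ^ 2 - 2 * u1 t ^ 2 / (u t) ^ 3) + l2 t|
          ≤ |(-(d : ℝ)/2) * (u2 t / u t - u1 t ^ 2 / (u t) ^ 2)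
            + (‖z‖ ^ 2 / 4) * (u2 t / (u t) ^ 2 - 2 * u1 t ^ 2 / (u t) ^ 3)| + |l2 t| :=
            abs_add_le _ _
        _ ≤ _ := by
            have := abs_add_le ((-(d : ℝ)/2) * (u2 t / u t - u1 t ^ 2 / (u t) ^ 2))
              ((‖z‖ ^ 2 / 4) * (u2 t / (u t) ^ 2 - 2 * u1 t ^ 2 / (u t) ^ 3))
            linarith
    have hd0 : (0:ℝ) ≤ (d : ℝ)/2 := by positivity
    have final : ((d : ℝ)/2) * (|u2 t / u t ^ 1| + |u1 t ^ 2 / u t ^ 2|)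
          + (‖z‖ ^ 2 / 4) * (|u2 t / u t ^ 2| + 2 * |u1 t ^ 2 / u t ^ 3|)
          + |l2 t| ≤ A * ‖z‖ ^ 2 + B * (‖z‖ ^ 2) ^ 2 := by
      rw [hA_def, hB_def]
      have b1 : |u2 t / u t ^ 1| + |u1 t ^ 2 / u t ^ 2|
          ≤ (M₂/c + M₁^2/c^2) * ‖z‖ ^ 2 := by
        have : (M₁ * ‖z‖) ^ 2 / c ^ 2 = M₁ ^ 2 / c ^ 2 * ‖z‖ ^ 2 := by ring
        rw [this] at e2
        have : M₂ * ‖z‖ ^ 2 / c ^ 1 = M₂ / c * ‖z‖ ^ 2 := by ring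
        rw [this] at e1
        ring_nf at e1 e2 ⊢
        linarith [e1, e2]
      have b2 : |u2 t / u t ^ 2| + 2 * |u1 t ^ 2 / u t ^ 3|
          ≤ (M₂/c^2 + 2 * M₁^2/c^3) * ‖z‖ ^ 2 := by
        have h4' : (M₁ * ‖z‖) ^ 2 / c ^ 3 = M₁ ^ 2 / c ^ 3 * ‖z‖ ^ 2 := by ring
        rw [h4'] at e4
        have h3' : M₂ * ‖z‖ ^ 2 / c ^ 2 = M₂ / c ^ 2 * ‖z‖ ^ 2 := by ring
        rw [h3'] at e3
        ring_nf at e3 e4 ⊢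
        linarith [e3, e4]
      have m1 : ((d : ℝ)/2) * (|u2 t / u t ^ 1| + |u1 t ^ 2 / u t ^ 2|)
          ≤ ((d : ℝ)/2) * ((M₂/c + M₁^2/c^2) * ‖z‖ ^ 2) :=
        mul_le_mul_of_nonneg_left b1 hd0
      have m2 : (‖z‖ ^ 2 / 4) * (|u2 t / u t ^ 2| + 2 * |u1 t ^ 2 / u t ^ 3|)
          ≤ (‖z‖ ^ 2 / 4) * ((M₂/c^2 + 2 * M₁^2/c^3) * ‖z‖ ^ 2) :=
        mul_le_mul_of_nonneg_left b2 (by positivity)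
      have : (((d : ℝ)/2) * (M₂/c + M₁^2/c^2) + ML) * ‖z‖ ^ 2
          + (1/4) * (M₂/c^2 + 2 * M₁^2/c^3) * (‖z‖ ^ 2) ^ 2
          = ((d : ℝ)/2) * ((M₂/c + M₁^2/c^2) * ‖z‖ ^ 2)
            + (‖z‖ ^ 2 / 4) * ((M₂/c^2 + 2 * M₁^2/c^3) * ‖z‖ ^ 2) + ML * ‖z‖ ^ 2 := by
        ring
      rw [this]
      linarith [m1, m2, e5]
    exact le_trans step1 final
  set K : ℝ := A * ‖z‖ ^ 2 + B * (‖z‖ ^ 2) ^ 2 with hK_def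
  have hK0 : 0 ≤ K := by rw [hK_def]; positivity
  -- Lipschitz bound on h1
  have hlip : ∀ s t : ℝ, |h1 t - h1 s| ≤ K * |t - s| := by
    intro s t
    have := (convex_univ (𝕜 := ℝ) (E := ℝ)).norm_image_sub_le_of_norm_hasDerivWithin_le
      (f := h1) (f' := h2) (C := K) (x := s) (y := t)
      (fun y _ => (hdh1 y).hasDerivWithinAt)
      (fun y _ => by rw [Real.norm_eq_abs]; exact hbh2 y) (trivial) (trivial)
    simpa [Real.norm_eq_abs] using this
  -- Taylor-type bound: |h ε - h 0 - h1 0 * ε| ≤ K * ε ^ 2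
  have htaylor : |h ε - h 0 - h1 0 * ε| ≤ K * ε ^ 2 := by
    set φ : ℝ → ℝ := fun t => h t - h1 0 * t with hφ_def
    have hdφ : ∀ t, HasDerivAt φ (h1 t - h1 0) t := fun t => by
      exact ((hdh t).sub ((hasDerivAt_id t).const_mul (h1 0))).congr_deriv (by simp)
    have key := (convex_Icc (0:ℝ) ε).norm_image_sub_le_of_norm_hasDerivWithin_le
      (f := φ) (f' := fun t => h1 t - h1 0) (C := K * ε)
      (fun y _ => (hdφ y).hasDerivWithinAt)
      (fun y hy => by
        rw [Real.norm_eq_abs]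
        calc |h1 y - h1 0| ≤ K * |y - 0| := hlip 0 y
          _ = K * |y| := by norm_num
          _ ≤ K * ε := by
              rw [abs_of_nonneg hy.1]
              exact mul_le_mul_of_nonneg_left hy.2 hK0)
      (Set.left_mem_Icc.mpr hε0.le) (Set.right_mem_Icc.mpr hε0.le)
    have : φ ε - φ 0 = h ε - h 0 - h1 0 * ε := by rw [hφ_def]; ring_nf
    rw [Real.norm_eq_abs, Real.norm_eq_abs, this, sub_zero, abs_of_pos hε0] at key
    calc |h ε - h 0 - h1 0 * ε| ≤ K * ε * ε := key
      _ = K * ε ^ 2 := by ring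
  -- identify alpha
  have hprod : ∀ t, qscaled D (γ t) z * ρeq (γ t) = Real.exp (h t) := by
    intro t
    rw [hh_def, Real.exp_add, hqG (γ t), hLf_def]
    simp [Real.exp_log (hρeqpos (γ t))]
  have hqpos : ∀ w, 0 < qscaled D w z := fun w => by
    rw [hqG w]; exact Real.exp_pos _
  have hαeq : alphaScaled D ρeq x z ε = min 1 (Real.exp (h ε - h 0)) := by
    rw [alphaScaled]
    have e1 : qscaled D (x + ε • z) z * ρeq (x + ε • z) = Real.exp (h ε) := hprod ε
    have e0 : qscaled D x z * ρeq x = Real.exp (h 0) := by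
      rw [← hγ0]; exact hprod 0
    rw [e1, e0, ← Real.exp_sub]
  -- identify beta
  have hβeq : betaScaled D ρeq x z ε = min 1 (Real.exp (h1 0 * ε)) := by
    rw [betaScaled]
    congr 1
    rw [aux_inner_gradient, aux_inner_gradient]
    -- fderiv of qscaled in w
    have hGdiff : DifferentiableAt ℝ G x := by
      rw [hG_def]
      have h1' : DifferentiableAt ℝ (fun w => Real.log (4 * π * D w)) x := by
        have : DifferentiableAt ℝ (fun w => 4 * π * D w) x :=
          (hDdiff x).const_mul (4 * π)
        exact this.log (by have := hDpos x; have := Real.pi_pos; positivity)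
      have h2'' : DifferentiableAt ℝ (fun w => ((4:ℝ) * D w)⁻¹) x :=
        ((hDdiff x).const_mul 4).inv (by have := hDpos x; positivity)
      have h2' : DifferentiableAt ℝ (fun w => -‖z‖ ^ 2 / (4 * D w)) x := by
        simp only [div_eq_mul_inv]
        exact h2''.const_mul _
      exact (h1'.const_mul _).add h2'
    have hqz : HasFDerivAt (fun w => qscaled D w z)
        (Real.exp (G x) • fderiv ℝ G x) x := by
      have : HasFDerivAt (fun w => Real.exp (G w))
          (Real.exp (G x) • fderiv ℝ G x) x := hGdiff.hasFDerivAt.exp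
      exact this.congr_of_eventuallyEq
        (Filter.Eventually.of_forall fun w => (hqG w))
    have hq_fderiv : fderiv ℝ (fun w => qscaled D w z) x z
        = Real.exp (G x) * fderiv ℝ G x z := by
      rw [hqz.fderiv]; simp
    have hGz : fderiv ℝ G x z = g1 0 := by
      have hGdiff' : DifferentiableAt ℝ G (γ 0) := hγ0 ▸ hGdiff
      have hc1 : HasDerivAt (fun t => G (γ t)) (fderiv ℝ G (γ 0) z) 0 :=
        (hGdiff'.hasFDerivAt).comp_hasDerivAt 0 (hγ 0)
      rw [hγ0] at hc1
      exact (hc1.unique (hdG 0))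
    have hρ : HasFDerivAt ρeq (ρeq x • fderiv ℝ Lf x) x := by
      have : HasFDerivAt (fun y => Real.exp (Lf y))
          (Real.exp (Lf x) • fderiv ℝ Lf x) x := (hLdiff x).hasFDerivAt.exp
      have heq : Real.exp (Lf x) = ρeq x := by
        rw [hLf_def]; exact Real.exp_log (hρeqpos x)
      rw [heq] at this
      exact this.congr_of_eventuallyEq
        (Filter.Eventually.of_forall fun y => (Real.exp_log (hρeqpos y)).symm)
    have hρ_fderiv : fderiv ℝ ρeq x z = ρeq x * fderiv ℝ Lf x z := by
      rw [hρ.fderiv]; simp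
    have hl10 : l1 0 = fderiv ℝ Lf x z := by rw [hl1_def]; simp [hγ0]
    rw [hq_fderiv, hρ_fderiv, hqG x]
    rw [hh1_def]
    have hqne : Real.exp (G x) ≠ 0 := (Real.exp_pos _).ne'
    have hρne : ρeq x ≠ 0 := (hρeqpos x).ne'
    field_simp
    rw [hGz, hl10]
  rw [hαeq, hβeq]
  calc |min 1 (Real.exp (h ε - h 0)) - min 1 (Real.exp (h1 0 * ε))|
      ≤ |(h ε - h 0) - h1 0 * ε| := aux_min_exp _ _
    _ ≤ K * ε ^ 2 := htaylor
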